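/- On the VB-mesh, the mesh step h_J = x_J − x_{J−1} at the transition index and the uniform step H = ψ′(α)/N satisfy ε(H − h_J)/(h_J H) ≤ ζ√ε/(aq), where ζ = (q−α)/√ε. -/

import Mathlib

/-- `ψ(t) = aεt/(q−t)`, the Bakhvalov mesh-generating function on the fine part. -/
noncomputable def psi (a ε q t : ℝ) : ℝ := a * ε * t / (q - t)

/-- `ψ′(t) = aεq/(q−t)²`. -/
noncomputable def psi' (a ε q t : ℝ) : ℝ := a * ε * q / (q - t) ^ 2

/-- The transition parameter `α = (q − √(aεq(1−q+aε)))/(1+aε)` of the VB-mesh. -/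
noncomputable def alph (a ε q : ℝ) : ℝ :=
  (q - Real.sqrt (a * ε * q * (1 - q + a * ε))) / (1 + a * ε)

/-- The mesh-generating function `λ`: `ψ` on `[0,α]`, its tangent line on `[α,1]`. -/
noncomputable def lam (a ε q t : ℝ) : ℝ :=
  if t ≤ alph a ε q then psi a ε q t
  else psi a ε q (alph a ε q) + psi' a ε q (alph a ε q) * (t - alph a ε q)

/-- VB-mesh points `x_i = λ(i/N)`. -/
noncomputable def meshx (a ε q : ℝ) (N i : ℕ) : ℝ := lam a ε q ((i : ℝ) / (N : ℝ))

/-- Mesh steps `h_i = x_i − x_{i−1}`. -/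
noncomputable def meshh (a ε q : ℝ) (N i : ℕ) : ℝ :=
  meshx a ε q N i - meshx a ε q N (i - 1)

/-- Averaged mesh steps `h̄_i = (h_i + h_{i+1})/2`. -/
noncomputable def meshhb (a ε q : ℝ) (N i : ℕ) : ℝ :=
  (meshh a ε q N i + meshh a ε q N (i + 1)) / 2

/-- The coarse (uniform) step `H = ψ′(α)/N` of the VB-mesh. -/
noncomputable def bigH (a ε q : ℝ) (N : ℕ) : ℝ := psi' a ε q (alph a ε q) / N

set_option maxHeartbeats 1000000 in
lemma core5 (a ε q α s n h H : ℝ) (ha : 0 < a) (hε : 0 < ε) (hq : 0 < q) (hn : 0 < n)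
    (hαq : α < q) (hsα : s < α) (hατ : α ≤ s + 1/n)
    (hh : h = psi a ε q α + psi' a ε q α * ((s + 1/n) - α) - psi a ε q s)
    (hH : H = psi' a ε q α / n) :
    ε * (H - h) / (h * H) ≤ (q - α) / (a * q) := by
  have hc0 : 0 < q - α := by linarith
  have hqs : 0 < q - s := by linarith
  have hu0 : 0 < α - s := by linarith
  have hc : q - α ≠ 0 := ne_of_gt hc0
  have hqs' : q - s ≠ 0 := ne_of_gt hqs
  have hn' : n ≠ 0 := ne_of_gt hn
  have hNu : n * (α - s) ≤ 1 := by
    have h1 : α - s ≤ 1/n := by linarith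
    calc n * (α - s) ≤ n * (1/n) := by nlinarith
    _ = 1 := by field_simp
  have hNu2 : n * (α - s)^2 ≤ α - s := by nlinarith
  have key : h = a*ε*q*((q-s) - n*(α-s)^2) / (n*(q-α)^2*(q-s)) := by
    rw [hh, psi, psi, psi']
    field_simp
    ring
  have keyH : H = a*ε*q / (n*(q-α)^2) := by rw [hH, psi', div_div, mul_comm ((q-α)^2) n]
  have hnum : 0 < (q-s) - n*(α-s)^2 := by nlinarith
  have hhpos : 0 < h := by rw [key]; positivity
  have hHpos : 0 < H := by rw [keyH]; positivity
  rw [div_le_div_iff₀ (by positivity) (by positivity)]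
  have e1 : ε*(H-h)*(a*q) = a^2*ε^2*q^2*(α-s)^2 / ((q-α)^2*(q-s)) := by
    rw [key, keyH]; field_simp; ring
  have e2 : (q-α)*(h*H) = a^2*ε^2*q^2*((q-s) - n*(α-s)^2) / (n^2*(q-α)^3*(q-s)) := by
    rw [key, keyH]; field_simp
  rw [e1, e2, div_le_div_iff₀ (by positivity) (by positivity)]
  have hsq1 : n^2*(α-s)^2 ≤ 1 := by nlinarith [mul_pos hn hu0]
  have main : n^2*(q-α)*(α-s)^2 + n*(α-s)^2 ≤ (q-α) + (α-s) := by
    nlinarith [mul_le_mul_of_nonneg_left hsq1 hc0.le]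
  nlinarith [mul_le_mul_of_nonneg_left main (le_of_lt (by positivity : (0:ℝ) < a^2*ε^2*q^2*(q-α)^2*(q-s)))]

/-- at the transition index `J` of the VB-mesh,
`ε(H − h_J)/(h_J H) ≤ ζ√ε/(aq)`, where `ζ = (q−α)/√ε` and `H = ψ′(α)/N`. -/
theorem stmt_5 (q a ε : ℝ) (hq0 : 0 < q) (hq1 : q < 1) (ha : 0 < a) (hε : 0 < ε)
    (haq : a * ε < q) (N : ℕ) (hN : 2 ≤ N) (J : ℕ) (hJ1 : 1 ≤ J) (hJN : J ≤ N)
    (hJl : ((J : ℝ) - 1) / (N : ℝ) < alph a ε q)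
    (hJr : alph a ε q ≤ (J : ℝ) / (N : ℝ)) :
    ε * (bigH a ε q N - meshh a ε q N J) / (meshh a ε q N J * bigH a ε q N) ≤
      ((q - alph a ε q) / Real.sqrt ε) * Real.sqrt ε / (a * q) := by
  have hsq : Real.sqrt ε ≠ 0 := ne_of_gt (Real.sqrt_pos.mpr hε)
  rw [div_mul_cancel₀ _ hsq]
  have h1aε : (0:ℝ) < 1 + a * ε := by positivity
  have hαq : alph a ε q < q := by
    rw [alph, div_lt_iff₀ h1aε]
    nlinarith [Real.sqrt_nonneg (a * ε * q * (1 - q + a * ε)), mul_pos ha hε]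
  have hn0 : (0:ℝ) < (N:ℝ) := by
    have : (0:ℕ) < N := by omega
    exact_mod_cast this
  have hJ1' : ((J - 1 : ℕ) : ℝ) = (J:ℝ) - 1 := by
    have := Nat.cast_sub (R := ℝ) hJ1
    simpa using this
  have hτ : (J:ℝ) / (N:ℝ) = ((J:ℝ) - 1) / (N:ℝ) + 1 / (N:ℝ) := by
    field_simp
    ring
  have hh : meshh a ε q N J = psi a ε q (alph a ε q) +
      psi' a ε q (alph a ε q) * (((((J:ℝ) - 1) / (N:ℝ)) + 1 / (N:ℝ)) - alph a ε q) -
      psi a ε q (((J:ℝ) - 1) / (N:ℝ)) := by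
    rw [meshh, meshx, meshx, hJ1']
    have h1 : lam a ε q (((J:ℝ) - 1) / (N:ℝ)) = psi a ε q (((J:ℝ) - 1) / (N:ℝ)) := by
      rw [lam, if_pos hJl.le]
    have h2 : lam a ε q ((J:ℝ) / (N:ℝ)) = psi a ε q (alph a ε q) +
        psi' a ε q (alph a ε q) * ((J:ℝ) / (N:ℝ) - alph a ε q) := by
      by_cases hτα : (J:ℝ) / (N:ℝ) ≤ alph a ε q
      · have heq : (J:ℝ) / (N:ℝ) = alph a ε q := le_antisymm hτα hJr
        rw [lam, if_pos hτα, heq, sub_self, mul_zero, add_zero]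
      · rw [lam, if_neg hτα]
    rw [h1, h2, ← hτ]
  exact core5 a ε q (alph a ε q) (((J:ℝ) - 1) / (N:ℝ)) (N:ℝ) _ _ ha hε hq0 hn0 hαq hJl
    (by rw [← hτ]; exact hJr) hh rfl
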